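/- arXiv:1012.5149 — 3 statements merged into one kernel-verified Lean document; each statement's English description precedes it below -/
import Mathlib

section
/- If the n-stage values v_n of a dynamic programming problem converge uniformly to a function v, then for every ε > 0 there exists n₀ such that for all n ≥ n₀, every initial state s, every feasible play (s_m) that is ε-optimal for the n-stage problem starting at s, and every t ∈ [0,1], one has |(1/n) Σ_{m=1}^{⌊tn⌋} f(s_m) − t·v(s)| ≤ 3ε. -/
open Filter Finset

/-- A dynamic programming problem: a set of states `S`, a correspondence `Phi`
with nonempty values, and a payoff function `f` with values in `[0,1]`. -/
structure DPP (S : Type*) where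
  Phi : S → Set S
  phi_nonempty : ∀ s, (Phi s).Nonempty
  f : S → ℝ
  f_mem : ∀ s, f s ∈ Set.Icc (0 : ℝ) 1

variable {S : Type*}

/-- A feasible play at `s`: a sequence `(s_m)_{m ≥ 1}` with `s₁ = s` and
`s_{m+1} ∈ Φ(s_m)`. -/
def DPP.Feasible (P : DPP S) (s : S) (play : ℕ → S) : Prop :=
  play 1 = s ∧ ∀ m, 1 ≤ m → play (m + 1) ∈ P.Phi (play m)

/-- The `n`-stage average payoff of a play: `(1/n) Σ_{m=1}^n f(s_m)`. -/
noncomputable def DPP.avg (P : DPP S) (n : ℕ) (play : ℕ → S) : ℝ :=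
  (1 / (n : ℝ)) * ∑ m ∈ Finset.Icc 1 n, P.f (play m)

/-- The `n`-stage value: supremum of the `n`-stage average payoff over feasible plays. -/
noncomputable def DPP.val (P : DPP S) (n : ℕ) (s : S) : ℝ :=
  sSup {x | ∃ play, P.Feasible s play ∧ x = P.avg n play}

namespace DPP
variable (P : DPP S)

lemma exists_feasible (s : S) : ∃ play, P.Feasible s play := by
  choose g hg using P.phi_nonempty
  refine ⟨fun m => Nat.rec s (fun _ prev => g prev) (m - 1), rfl, ?_⟩
  intro m hm
  obtain ⟨j, rfl⟩ := Nat.exists_eq_add_of_le hm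
  have h1 : 1 + j + 1 - 1 = j + 1 := by omega
  have h2 : 1 + j - 1 = j := by omega
  simp only [h1, h2]
  exact hg _

lemma sum_nonneg' (play : ℕ → S) (a b : ℕ) :
    0 ≤ ∑ m ∈ Finset.Icc a b, P.f (play m) :=
  Finset.sum_nonneg fun m _ => (P.f_mem (play m)).1

lemma sum_le_card (play : ℕ → S) (n : ℕ) :
    ∑ m ∈ Finset.Icc 1 n, P.f (play m) ≤ n := by
  calc ∑ m ∈ Finset.Icc 1 n, P.f (play m) ≤ ∑ m ∈ Finset.Icc 1 n, 1 :=
        Finset.sum_le_sum fun m _ => (P.f_mem (play m)).2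
    _ = n := by simp [Nat.card_Icc]

lemma avg_nonneg (n : ℕ) (play : ℕ → S) : 0 ≤ P.avg n play := by
  have := P.sum_nonneg' play 1 n
  unfold avg; positivity

lemma avg_le_one (n : ℕ) (play : ℕ → S) : P.avg n play ≤ 1 := by
  rcases Nat.eq_zero_or_pos n with h | h
  · simp [avg, h]
  · unfold avg
    rw [one_div, inv_mul_le_iff₀ (by positivity), mul_one]
    exact P.sum_le_card play n

lemma bddAbove_set (n : ℕ) (s : S) :
    BddAbove {x | ∃ play, P.Feasible s play ∧ x = P.avg n play} := by
  refine ⟨1, fun x hx => ?_⟩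
  obtain ⟨play, _, rfl⟩ := hx
  exact P.avg_le_one n play

lemma avg_le_val {s : S} {play : ℕ → S} (h : P.Feasible s play) (n : ℕ) :
    P.avg n play ≤ P.val n s :=
  le_csSup (P.bddAbove_set n s) ⟨play, h, rfl⟩

lemma val_le (n : ℕ) (s : S) {c : ℝ}
    (hc : ∀ play, P.Feasible s play → P.avg n play ≤ c) : P.val n s ≤ c := by
  obtain ⟨p, hp⟩ := P.exists_feasible s
  exact csSup_le ⟨_, p, hp, rfl⟩ (by rintro x ⟨q, hq, rfl⟩; exact hc q hq)

lemma val_nonneg (n : ℕ) (s : S) : 0 ≤ P.val n s := by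
  obtain ⟨p, hp⟩ := P.exists_feasible s
  exact le_trans (P.avg_nonneg n p) (P.avg_le_val hp n)

lemma val_le_one (n : ℕ) (s : S) : P.val n s ≤ 1 :=
  P.val_le n s fun play _ => P.avg_le_one n play

lemma feasible_shift {s : S} {play : ℕ → S} (h : P.Feasible s play) (k : ℕ) :
    P.Feasible (play (k + 1)) (fun m => play (k + m)) := by
  refine ⟨rfl, fun m hm => ?_⟩
  have := h.2 (k + m) (le_add_of_nonneg_of_le (Nat.zero_le k) hm)
  simpa [Nat.add_assoc] using this



lemma sum_head_le {s : S} {play : ℕ → S} (h : P.Feasible s play) (k : ℕ) :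
    ∑ m ∈ Finset.Icc 1 k, P.f (play m) ≤ (k : ℝ) * P.val k s := by
  rcases Nat.eq_zero_or_pos k with rfl | hk
  · simp
  · have h1 : P.avg k play ≤ P.val k s := P.avg_le_val h k
    have h2 : (k : ℝ) * P.avg k play = ∑ m ∈ Finset.Icc 1 k, P.f (play m) := by
      unfold avg
      have : (k : ℝ) ≠ 0 := Nat.cast_ne_zero.mpr hk.ne'
      field_simp
    calc ∑ m ∈ Finset.Icc 1 k, P.f (play m) = (k : ℝ) * P.avg k play := h2.symm
      _ ≤ (k : ℝ) * P.val k s := by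
          exact mul_le_mul_of_nonneg_left h1 (Nat.cast_nonneg k)

lemma sum_shift (g : ℕ → ℝ) (k l : ℕ) :
    ∑ m ∈ Finset.Icc (k + 1) (k + l), g m = ∑ j ∈ Finset.Icc 1 l, g (k + j) := by
  rw [← Finset.map_add_left_Icc 1 l k, Finset.sum_map]
  rfl

lemma sum_tail_le {s : S} {play : ℕ → S} (h : P.Feasible s play) {k n : ℕ} (hkn : k ≤ n) :
    ∑ m ∈ Finset.Icc (k + 1) n, P.f (play m) ≤ ((n - k : ℕ) : ℝ) * P.val (n - k) (play (k + 1)) := by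
  set l := n - k with hl
  have hn : n = k + l := by omega
  rcases Nat.eq_zero_or_pos l with hl0 | hlpos
  · simp [hn, hl0]
  · have hshift := P.feasible_shift h k
    have h1 : P.avg l (fun m => play (k + m)) ≤ P.val l (play (k + 1)) :=
      P.avg_le_val hshift l
    have h2 : (l : ℝ) * P.avg l (fun m => play (k + m))
        = ∑ m ∈ Finset.Icc (k + 1) n, P.f (play m) := by
      unfold avg
      rw [hn, sum_shift (fun m => P.f (play m)) k l]
      have : (l : ℝ) ≠ 0 := Nat.cast_ne_zero.mpr hlpos.ne'
      field_simp
    calc ∑ m ∈ Finset.Icc (k + 1) n, P.f (play m)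
        = (l : ℝ) * P.avg l (fun m => play (k + m)) := h2.symm
      _ ≤ (l : ℝ) * P.val l (play (k + 1)) :=
          mul_le_mul_of_nonneg_left h1 (Nat.cast_nonneg l)

/-- Concatenation: the value at `s` dominates (scaled) values at reachable states. -/
lemma val_concat {s : S} {play : ℕ → S} (h : P.Feasible s play) {k n : ℕ}
    (hk : 1 ≤ k) (hkn : k ≤ n) :
    ((n - k : ℕ) : ℝ) * P.val (n - k) (play (k + 1)) ≤ (n : ℝ) * P.val n s := by
  set l := n - k with hl
  have hn : n = k + l := by omega
  rcases Nat.eq_zero_or_pos l with hl0 | hlpos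
  · rw [hl0]
    push_cast
    rw [zero_mul]
    exact mul_nonneg (Nat.cast_nonneg n) (P.val_nonneg n s)
  · have hval : P.val l (play (k + 1)) ≤ ((n : ℝ) * P.val n s) / l := by
      apply P.val_le
      intro p' hp'
      -- concatenated play
      set q : ℕ → S := fun m => if m ≤ k then play m else p' (m - k) with hq
      have hq1 : P.Feasible s q := by
        constructor
        · simp [hq, hk, h.1]
        · intro m hm
          rcases lt_trichotomy m k with hmk | rfl | hmk
          · have e1 : q (m + 1) = play (m + 1) := by simp [hq, Nat.succ_le_of_lt hmk]
            have e2 : q m = play m := by simp [hq, hmk.le]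
            rw [e1, e2]; exact h.2 m hm
          · have e1 : q (m + 1) = p' 1 := by
              simp [hq, Nat.lt_irrefl]
            have e2 : q m = play m := by simp [hq]
            rw [e1, e2, hp'.1]
            exact h.2 m hm
          · have e1 : q (m + 1) = p' (m + 1 - k) := by
              have : ¬ (m + 1 ≤ k) := by omega
              simp [hq, this]
            have e2 : q m = p' (m - k) := by
              have : ¬ (m ≤ k) := by omega
              simp [hq, this]
            have e3 : m + 1 - k = (m - k) + 1 := by omega
            rw [e1, e2, e3]
            exact hp'.2 (m - k) (by omega)
      -- sum computation
      have hsum : (l : ℝ) * P.avg l p' ≤ (n : ℝ) * P.avg n q := by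
        have e1 : (l : ℝ) * P.avg l p' = ∑ j ∈ Finset.Icc 1 l, P.f (p' j) := by
          unfold avg
          have : (l : ℝ) ≠ 0 := Nat.cast_ne_zero.mpr hlpos.ne'
          field_simp
        have e2 : (n : ℝ) * P.avg n q = ∑ m ∈ Finset.Icc 1 n, P.f (q m) := by
          unfold avg
          have : (n : ℝ) ≠ 0 := Nat.cast_ne_zero.mpr (by omega)
          field_simp
        have e3 : ∑ j ∈ Finset.Icc 1 l, P.f (p' j)
            = ∑ m ∈ Finset.Icc (k + 1) n, P.f (q m) := by
          rw [hn, sum_shift (fun m => P.f (q m)) k l]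
          apply Finset.sum_congr rfl
          intro j hj
          have hj1 : 1 ≤ j := (Finset.mem_Icc.mp hj).1
          have : ¬ (k + j ≤ k) := by omega
          simp [hq, this]
        have e4 : ∑ m ∈ Finset.Icc (k + 1) n, P.f (q m)
            ≤ ∑ m ∈ Finset.Icc 1 n, P.f (q m) := by
          apply Finset.sum_le_sum_of_subset_of_nonneg
          · intro x hx
            simp only [Finset.mem_Icc] at *
            omega
          · intro i _ _
            exact (P.f_mem (q i)).1
        rw [e1, e2]
        exact le_trans (le_of_eq e3) e4
      have hq2 : P.avg n q ≤ P.val n s := P.avg_le_val hq1 n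
      have hlne : (0:ℝ) < l := Nat.cast_pos.mpr hlpos
      rw [le_div_iff₀ hlne, mul_comm (P.avg l p') (l:ℝ)]
      calc (l : ℝ) * P.avg l p' ≤ (n : ℝ) * P.avg n q := hsum
        _ ≤ (n : ℝ) * P.val n s := mul_le_mul_of_nonneg_left hq2 (Nat.cast_nonneg n)
    have hlne : (0:ℝ) < l := Nat.cast_pos.mpr hlpos
    calc (l : ℝ) * P.val l (play (k + 1)) ≤ (l : ℝ) * (((n : ℝ) * P.val n s) / l) :=
          mul_le_mul_of_nonneg_left hval (Nat.cast_nonneg l)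
      _ = (n : ℝ) * P.val n s := by field_simp


lemma v_bounds {v : S → ℝ} (hconv : TendstoUniformly (fun n s => P.val n s) v atTop)
    (x : S) : v x ∈ Set.Icc (0:ℝ) 1 := by
  have ht : Tendsto (fun n => P.val n x) atTop (nhds (v x)) := hconv.tendsto_at x
  exact ⟨ge_of_tendsto' ht (fun n => P.val_nonneg n x),
    le_of_tendsto' ht (fun n => P.val_le_one n x)⟩

/-- `v` is non-increasing along feasible plays. -/
lemma v_mono {v : S → ℝ} (hconv : TendstoUniformly (fun n s => P.val n s) v atTop)
    {s : S} {play : ℕ → S} (h : P.Feasible s play) (k : ℕ) :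
    v (play (k + 1)) ≤ v s := by
  rcases Nat.eq_zero_or_pos k with rfl | hk
  · rw [show (0:ℕ) + 1 = 1 from rfl, h.1]
  · apply le_of_forall_pos_le_add
    intro η hη
    set η' := η / 3 with hη'def
    have hη'pos : 0 < η' := by positivity
    obtain ⟨N, hN⟩ := eventually_atTop.mp (Metric.tendstoUniformly_iff.mp hconv η' hη'pos)
    set n : ℕ := N + k + ⌈(k:ℝ)/η'⌉₊ with hndef
    have hkn : k ≤ n := by omega
    have key := P.val_concat h hk hkn
    have h1 := hN n (by omega) s
    have h2 := hN (n - k) (by omega) (play (k + 1))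
    rw [Real.dist_eq, abs_lt] at h1 h2
    set a := P.val (n - k) (play (k + 1)) with hadef
    set b := P.val n s with hbdef
    have hcast : ((n - k : ℕ) : ℝ) = (n : ℝ) - (k : ℝ) := by
      push_cast [Nat.cast_sub hkn]; ring
    rw [hcast] at key
    have hkn' : (k : ℝ) ≤ η' * n := by
      have h5 : (k:ℝ)/η' ≤ (⌈(k:ℝ)/η'⌉₊ : ℝ) := Nat.le_ceil _
      have h6 : ((⌈(k:ℝ)/η'⌉₊ : ℕ) : ℝ) ≤ (n : ℝ) := by exact_mod_cast (by omega : ⌈(k:ℝ)/η'⌉₊ ≤ n)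
      rw [div_le_iff₀ hη'pos] at h5
      calc (k:ℝ) ≤ (⌈(k:ℝ)/η'⌉₊ : ℝ) * η' := h5
        _ ≤ (n:ℝ) * η' := mul_le_mul_of_nonneg_right h6 hη'pos.le
        _ = η' * n := mul_comm _ _
    have hL : (0:ℝ) ≤ (n:ℝ) - k := by
      have : (k:ℝ) ≤ n := Nat.cast_le.mpr hkn
      linarith
    have hn0 : (0:ℝ) < n := by positivity
    have hv1 : v (play (k + 1)) ≤ 1 := (P.v_bounds hconv _).2
    have hk0 : (0:ℝ) ≤ k := Nat.cast_nonneg k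
    -- v s' - η' < a ; b < v s + η'
    have m1 : ((n:ℝ) - k) * (v (play (k + 1)) - η') ≤ ((n:ℝ) - k) * a :=
      mul_le_mul_of_nonneg_left (by linarith [h2.1]) hL
    have m2 : (n:ℝ) * b ≤ (n:ℝ) * (v s + η') :=
      mul_le_mul_of_nonneg_left (by linarith [h1.2]) hn0.le
    have m3 : (k:ℝ) * v (play (k + 1)) ≤ (k:ℝ) * 1 :=
      mul_le_mul_of_nonneg_left hv1 hk0
    -- combine: n*(v s' - v s - 3η') ≤ 0
    nlinarith [m1, m2, m3, key, hkn', hn0]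

end DPP

set_option maxHeartbeats 1000000 in
/-- If the n-stage values `v_n` converge uniformly to `v`, then for every `ε > 0` there is
`n₀` such that for all `n ≥ n₀`, every state `s`, every feasible play `ε`-optimal for the
`n`-stage problem at `s`, and every `t ∈ [0,1]`:
`|(1/n) Σ_{m=1}^{⌊tn⌋} f(s_m) − t·v(s)| ≤ 3ε`. -/
theorem property_P_of_regular (P : DPP S) (v : S → ℝ)
    (hconv : TendstoUniformly (fun n s => P.val n s) v atTop) :
    ∀ ε > (0 : ℝ), ∃ n₀ : ℕ, ∀ n ≥ n₀, ∀ s : S, ∀ play : ℕ → S,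
      P.Feasible s play → P.avg n play ≥ P.val n s - ε →
      ∀ t ∈ Set.Icc (0 : ℝ) 1,
        |(1 / (n : ℝ)) * ∑ m ∈ Finset.Icc 1 ⌊t * (n : ℝ)⌋₊, P.f (play m) - t * v s| ≤ 3 * ε := by
  intro ε hε
  set δ : ℝ := ε / 2 with hδdef
  have hδpos : 0 < δ := by positivity
  obtain ⟨N, hN⟩ := eventually_atTop.mp (Metric.tendstoUniformly_iff.mp hconv δ hδpos)
  refine ⟨N + ⌈((N:ℝ)+1)/ε⌉₊ + 1, ?_⟩
  intro n hn s play hfeas hopt t ht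
  obtain ⟨ht0, ht1⟩ := ht
  have hnN : N ≤ n := by omega
  have hn1 : 1 ≤ n := by omega
  have hn0 : (0:ℝ) < n := by exact_mod_cast hn1
  have hN0 : (0:ℝ) ≤ N := Nat.cast_nonneg N
  have hNe : (N:ℝ) + 1 ≤ ε * n := by
    have h5 : ((N:ℝ)+1)/ε ≤ (⌈((N:ℝ)+1)/ε⌉₊ : ℝ) := Nat.le_ceil _
    have h6 : ((⌈((N:ℝ)+1)/ε⌉₊ : ℕ) : ℝ) ≤ (n : ℝ) := by
      exact_mod_cast (by omega : ⌈((N:ℝ)+1)/ε⌉₊ ≤ n)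
    rw [div_le_iff₀ hε] at h5
    have h7 := mul_le_mul_of_nonneg_right h6 hε.le
    linarith
  set k : ℕ := ⌊t * (n:ℝ)⌋₊ with hkdef
  have htn0 : 0 ≤ t * (n:ℝ) := by positivity
  have hkt1 : (k:ℝ) ≤ t * n := Nat.floor_le htn0
  have hkt2 : t * (n:ℝ) < (k:ℝ) + 1 := Nat.lt_floor_add_one _
  have hkn : k ≤ n := by
    have h8 : t * (n:ℝ) ≤ n := by nlinarith
    have : (k:ℝ) ≤ (n:ℝ) := hkt1.trans h8
    exact_mod_cast this
  have hkR : (k:ℝ) ≤ (n:ℝ) := Nat.cast_le.mpr hkn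
  set A : ℝ := ∑ m ∈ Finset.Icc 1 k, P.f (play m) with hAdef
  set B : ℝ := ∑ m ∈ Finset.Icc (k+1) n, P.f (play m) with hBdef
  have hv0 : 0 ≤ v s := (P.v_bounds hconv s).1
  have hv1 : v s ≤ 1 := (P.v_bounds hconv s).2
  have hA0 : 0 ≤ A := P.sum_nonneg' play 1 k
  have hB0 : 0 ≤ B := P.sum_nonneg' play (k+1) n
  have hclose : ∀ m, N ≤ m → ∀ x, |v x - P.val m x| < δ := by
    intro m hm x
    have := hN m hm x
    rwa [Real.dist_eq] at this
  -- A + B = n * avg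
  have hAB : A + B = (n:ℝ) * P.avg n play := by
    have e0 : Finset.Icc 1 k = Finset.Ioc 0 k := by rw [← Finset.Icc_add_one_left_eq_Ioc]; rfl
    have e1 : Finset.Icc (k+1) n = Finset.Ioc k n := Finset.Icc_add_one_left_eq_Ioc k n
    have e2 : Finset.Icc 1 n = Finset.Ioc 0 n := by rw [← Finset.Icc_add_one_left_eq_Ioc]; rfl
    have hsplit : A + B = ∑ m ∈ Finset.Icc 1 n, P.f (play m) := by
      rw [hAdef, hBdef, e0, e1, e2]
      exact Finset.sum_Ioc_consecutive _ (Nat.zero_le k) hkn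
    rw [hsplit]
    unfold DPP.avg
    field_simp
  have hval_n : v s - δ < P.val n s := by
    linarith [(abs_lt.mp (hclose n hnN s)).2]
  have hABlow : (n:ℝ) * (v s - δ) - (n:ℝ) * ε ≤ A + B := by
    have h7 : (n:ℝ) * (P.val n s - ε) ≤ (n:ℝ) * P.avg n play :=
      mul_le_mul_of_nonneg_left hopt hn0.le
    have h8 : (n:ℝ) * (v s - δ) ≤ (n:ℝ) * P.val n s :=
      mul_le_mul_of_nonneg_left hval_n.le hn0.le
    rw [hAB]
    linarith
  -- upper bound on A
  have hAupper : A ≤ t * (n:ℝ) * v s + (n:ℝ) * δ + (N:ℝ) := by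
    rcases lt_or_ge k N with hkN | hkN
    · have h9 : A ≤ (k:ℝ) := P.sum_le_card play k
      have h10 : (k:ℝ) < N := Nat.cast_lt.mpr hkN
      have h11 : 0 ≤ t * (n:ℝ) * v s := by positivity
      have h12 : 0 ≤ (n:ℝ) * δ := by positivity
      linarith
    · have h9 : A ≤ (k:ℝ) * P.val k s := P.sum_head_le hfeas k
      have h10 : P.val k s < v s + δ := by
        linarith [(abs_lt.mp (hclose k hkN s)).1]
      have h11 : (k:ℝ) * P.val k s ≤ (k:ℝ) * (v s + δ) :=
        mul_le_mul_of_nonneg_left h10.le (Nat.cast_nonneg k)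
      have h12 : (k:ℝ) * v s ≤ t * (n:ℝ) * v s := mul_le_mul_of_nonneg_right hkt1 hv0
      have h13 : (k:ℝ) * δ ≤ (n:ℝ) * δ := mul_le_mul_of_nonneg_right hkR hδpos.le
      nlinarith [h9, h11, h12, h13, hN0]
  -- upper bound on B
  have hBupper : B ≤ ((n:ℝ) - k) * v s + (n:ℝ) * δ + (N:ℝ) := by
    have hLpos : (0:ℝ) ≤ (n:ℝ) - k := by linarith
    rcases lt_or_ge (n - k) N with hlN | hlN
    · have h9 : B ≤ ((n - k:ℕ):ℝ) := by
        rw [hBdef]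
        calc ∑ m ∈ Finset.Icc (k+1) n, P.f (play m)
            ≤ ∑ m ∈ Finset.Icc (k+1) n, 1 :=
              Finset.sum_le_sum fun m _ => (P.f_mem (play m)).2
          _ = ((Finset.Icc (k+1) n).card : ℝ) := by simp
          _ = ((n - k:ℕ):ℝ) := by rw [Nat.card_Icc]; congr 1; omega
      have h10 : ((n - k:ℕ):ℝ) < N := Nat.cast_lt.mpr hlN
      have h11 : 0 ≤ ((n:ℝ) - k) * v s := mul_nonneg hLpos hv0
      have h12 : 0 ≤ (n:ℝ) * δ := by positivity
      linarith
    · have h9 : B ≤ ((n - k : ℕ):ℝ) * P.val (n - k) (play (k+1)) := P.sum_tail_le hfeas hkn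
      have hcast : ((n - k : ℕ):ℝ) = (n:ℝ) - k := by push_cast [Nat.cast_sub hkn]; ring
      rw [hcast] at h9
      have h10 : P.val (n-k) (play (k+1)) < v (play (k+1)) + δ := by
        linarith [(abs_lt.mp (hclose (n-k) hlN (play (k+1)))).1]
      have h11 : v (play (k+1)) ≤ v s := P.v_mono hconv hfeas k
      have h12 : ((n:ℝ) - k) * P.val (n-k) (play (k+1)) ≤ ((n:ℝ) - k) * (v s + δ) :=
        mul_le_mul_of_nonneg_left (by linarith) hLpos
      have h13 : 0 ≤ (k:ℝ) * δ := mul_nonneg (Nat.cast_nonneg k) hδpos.le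
      nlinarith [h9, h12, h13, hN0]
  -- key bound on |A - n t v s|
  have hp1 : (t * (n:ℝ) - k) * v s ≤ 1 := by
    have h0 : (0:ℝ) ≤ t * (n:ℝ) - k := by linarith
    have := mul_le_mul_of_nonneg_left hv1 h0
    nlinarith [this, h0, hkt2]
  have key : |A - (n:ℝ) * (t * v s)| ≤ 3 * ε * n := by
    rw [abs_le]
    constructor
    · nlinarith [hABlow, hBupper, hp1, hNe]
    · nlinarith [hAupper, hNe, hA0]
  -- reduce goal
  have hrw : (1 / (n:ℝ)) * A - t * v s = (1 / (n:ℝ)) * (A - (n:ℝ) * (t * v s)) := by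
    field_simp
  rw [hrw, abs_mul, abs_of_nonneg (by positivity : (0:ℝ) ≤ 1/(n:ℝ))]
  calc (1/(n:ℝ)) * |A - (n:ℝ) * (t * v s)| ≤ (1/(n:ℝ)) * (3 * ε * n) :=
        mul_le_mul_of_nonneg_left key (by positivity)
    _ = 3 * ε := by field_simp
end

section
/- Suppose v_n converges uniformly to v on S. Then for every ε > 0 there exists n₀ such that for all n ≥ n₀, every state s, every feasible play (s_m) ε-optimal for the n-stage problem at s, and every t ∈ [ε, 1], the upper bound (1/n) Σ_{m=1}^{⌊tn⌋} f(s_m) ≤ t·v(s) + 3ε holds. -/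
open Filter Finset

variable {S : Type*}

lemma DPP.avg_nonneg_s3 (P : DPP S) (n : ℕ) (play : ℕ → S) : 0 ≤ P.avg n play := by
  unfold DPP.avg
  have : 0 ≤ ∑ m ∈ Finset.Icc 1 n, P.f (play m) :=
    Finset.sum_nonneg fun m _ => (P.f_mem (play m)).1
  positivity

lemma DPP.avg_le_one_s3 (P : DPP S) (n : ℕ) (play : ℕ → S) : P.avg n play ≤ 1 := by
  unfold DPP.avg
  have h1 : ∑ m ∈ Finset.Icc 1 n, P.f (play m) ≤ (n : ℝ) := by
    calc ∑ m ∈ Finset.Icc 1 n, P.f (play m) ≤ ∑ m ∈ Finset.Icc 1 n, (1 : ℝ) :=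
          Finset.sum_le_sum fun m _ => (P.f_mem (play m)).2
      _ = (n : ℝ) := by simp
  rcases Nat.eq_zero_or_pos n with h0 | h0
  · simp [h0]
  · have hn : (0 : ℝ) < n := by exact_mod_cast h0
    calc (1 / (n : ℝ)) * ∑ m ∈ Finset.Icc 1 n, P.f (play m)
        ≤ (1 / (n : ℝ)) * (n : ℝ) := by
          apply mul_le_mul_of_nonneg_left h1 (by positivity)
      _ = 1 := by field_simp

lemma DPP.avg_le_val_s3 (P : DPP S) {s : S} {play : ℕ → S}
    (h : P.Feasible s play) (n : ℕ) : P.avg n play ≤ P.val n s := by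
  apply le_csSup
  · refine ⟨1, ?_⟩
    rintro x ⟨q, _, rfl⟩
    exact P.avg_le_one_s3 n q
  · exact ⟨play, h, rfl⟩

/-- Upper bound: if `v_n → v` uniformly, then for every `ε > 0` there is `n₀` such that for
all `n ≥ n₀`, every state `s`, every `ε`-optimal feasible play and every `t ∈ [ε,1]`:
`(1/n) Σ_{m=1}^{⌊tn⌋} f(s_m) ≤ t·v(s) + 3ε`. -/
theorem property_P_upper (P : DPP S) (v : S → ℝ)
    (hconv : TendstoUniformly (fun n s => P.val n s) v atTop) :
    ∀ ε > (0 : ℝ), ∃ n₀ : ℕ, ∀ n ≥ n₀, ∀ s : S, ∀ play : ℕ → S,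
      P.Feasible s play → P.avg n play ≥ P.val n s - ε →
      ∀ t ∈ Set.Icc ε 1,
        (1 / (n : ℝ)) * ∑ m ∈ Finset.Icc 1 ⌊t * (n : ℝ)⌋₊, P.f (play m) ≤ t * v s + 3 * ε := by
  intro ε hε
  rw [Metric.tendstoUniformly_iff] at hconv
  obtain ⟨N, hN⟩ := Filter.eventually_atTop.mp (hconv ε hε)
  set N' : ℕ := max N 1 with hN'def
  refine ⟨⌈(N' : ℝ) / ε⌉₊, ?_⟩
  intro n hn s play hfeas _ t ht
  obtain ⟨htε, ht1⟩ := ht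
  set k : ℕ := ⌊t * (n : ℝ)⌋₊ with hkdef
  have hnn : ((⌈(N' : ℝ) / ε⌉₊ : ℝ)) ≤ (n : ℝ) := by exact_mod_cast hn
  have hNn : (N' : ℝ) / ε ≤ (n : ℝ) := le_trans (Nat.le_ceil _) hnn
  have hNεn : (N' : ℝ) ≤ ε * n := by
    rw [div_le_iff₀ hε] at hNn
    linarith [hNn]
  have htn : (N' : ℝ) ≤ t * n := by
    have hn0 : (0 : ℝ) ≤ (n : ℝ) := Nat.cast_nonneg n
    nlinarith
  have hkN' : N' ≤ k := Nat.le_floor htn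
  have hk1 : 1 ≤ k := le_trans (le_max_right N 1) hkN'
  have hkN : N ≤ k := le_trans (le_max_left N 1) hkN'
  have hk0 : (0 : ℝ) < (k : ℝ) := by exact_mod_cast hk1
  -- k ≤ t * n
  have hktn : (k : ℝ) ≤ t * n := Nat.floor_le (mul_nonneg (le_trans hε.le htε) (Nat.cast_nonneg n))
  have hn0 : (0 : ℝ) < (n : ℝ) := by
    by_contra h
    push_neg at h
    have : t * (n : ℝ) ≤ 0 := by nlinarith
    linarith
  -- value bound at stage k
  have hdist := hN k hkN s
  have hval_lt : P.val k s < v s + ε := by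
    rw [Real.dist_eq, abs_sub_lt_iff] at hdist
    linarith [hdist.1]
  have havg_le : P.avg k play ≤ P.val k s := P.avg_le_val_s3 hfeas k
  have havg0 : 0 ≤ P.avg k play := P.avg_nonneg_s3 k play
  -- rewrite the sum
  have hsum : (1 / (n : ℝ)) * ∑ m ∈ Finset.Icc 1 k, P.f (play m)
      = ((k : ℝ) / n) * P.avg k play := by
    unfold DPP.avg
    field_simp
  rw [hsum]
  have hkn_t : (k : ℝ) / n ≤ t := by
    rw [div_le_iff₀ hn0]
    exact hktn
  have h1 : ((k : ℝ) / n) * P.avg k play ≤ t * P.avg k play :=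
    mul_le_mul_of_nonneg_right hkn_t havg0
  have h2 : t * P.avg k play ≤ t * (v s + ε) := by
    apply mul_le_mul_of_nonneg_left _ (le_of_lt (lt_of_lt_of_le hε htε))
    linarith
  have h3 : t * (v s + ε) ≤ t * v s + 3 * ε := by nlinarith
  linarith
end

section
/- If the dynamic programming problem has a uniform value v_∞, then for every ε > 0 there exists N such that for every state s there is a single feasible play (s_m) at s satisfying |(1/n) Σ_{m=1}^{⌊tn⌋} f(s_m) − t·v_∞(s)| ≤ 3ε for all n ≥ N/ε and all t ∈ [ε, 1]. -/
open Filter Finset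

variable {S : Type*}

/-- `w` is a uniform value (see the paper). -/
def DPP.IsUniformValue (P : DPP S) (w : S → ℝ) : Prop :=
  ∀ ε > (0 : ℝ), ∃ N : ℕ, ∀ s : S,
    (∃ play, P.Feasible s play ∧ ∀ n ≥ N, P.avg n play ≥ w s - ε) ∧
    (∀ play, P.Feasible s play → ∀ n ≥ N, P.avg n play ≤ w s + ε)

/-- If the problem has a uniform value `w`, then for every `ε > 0` there is `N` such that
from every state `s` there is a single feasible play `(s_m)` with
`|(1/n) Σ_{m=1}^{⌊tn⌋} f(s_m) − t·w(s)| ≤ 3ε` for all `n ≥ N/ε` and all `t ∈ [ε,1]`. -/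
theorem uniformValue_constant_payoff_on_play (P : DPP S) (w : S → ℝ)
    (h : P.IsUniformValue w) :
    ∀ ε > (0 : ℝ), ∃ N : ℕ, ∀ s : S, ∃ play : ℕ → S, P.Feasible s play ∧
      ∀ n : ℕ, (N : ℝ) / ε ≤ (n : ℝ) → ∀ t ∈ Set.Icc ε 1,
        |(1 / (n : ℝ)) * ∑ m ∈ Finset.Icc 1 ⌊t * (n : ℝ)⌋₊, P.f (play m) - t * w s| ≤ 3 * ε := by
  intro ε hε
  obtain ⟨N', hN'⟩ := h ε hε
  refine ⟨max N' 1, fun s => ?_⟩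
  obtain ⟨play, hfeas, hge⟩ := (hN' s).1
  have hle := (hN' s).2 play hfeas
  refine ⟨play, hfeas, ?_⟩
  rintro n hn t ⟨htε, ht1⟩
  have hε1 : ε ≤ 1 := le_trans htε ht1
  have ht0 : 0 < t := lt_of_lt_of_le hε htε
  have hNmax : (1:ℝ) ≤ (max N' 1 : ℕ) := by exact_mod_cast le_max_right N' 1
  have hdiv : (1:ℝ)/ε ≤ ((max N' 1 : ℕ):ℝ)/ε := by gcongr
  have hn1 : (1:ℝ) ≤ n := by
    have h1 : (1:ℝ)/ε ≤ n := le_trans hdiv hn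
    rw [div_le_iff₀ hε] at h1
    nlinarith
  have hn0 : (0:ℝ) < n := lt_of_lt_of_le one_pos hn1
  have hinv : (1:ℝ) ≤ ε * n := by
    have h1 : (1:ℝ)/ε ≤ n := le_trans hdiv hn
    rw [div_le_iff₀ hε] at h1; linarith
  set k := ⌊t * (n:ℝ)⌋₊ with hkdef
  have htn : ((max N' 1 : ℕ):ℝ) ≤ t * n := by
    calc ((max N' 1 : ℕ):ℝ) = ε * (((max N' 1 : ℕ):ℝ)/ε) := by field_simp
    _ ≤ t * n := mul_le_mul htε hn (by positivity) (le_of_lt ht0)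
  have hkN : max N' 1 ≤ k := Nat.le_floor htn
  have hkN' : N' ≤ k := le_trans (le_max_left _ _) hkN
  have hk1 : 1 ≤ k := le_trans (le_max_right _ _) hkN
  have hk0 : (0:ℝ) < k := by exact_mod_cast hk1
  have hkle : (k:ℝ) ≤ t * n := Nat.floor_le (by positivity)
  have hklt : t * n - 1 < k := Nat.sub_one_lt_floor _
  have hA1 := hge k hkN'
  have hA2 := hle k hkN'
  set A := P.avg k play with hA
  -- A ∈ [0,1]
  have hsum0 : (0:ℝ) ≤ ∑ m ∈ Finset.Icc 1 k, P.f (play m) :=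
    Finset.sum_nonneg fun m _ => (P.f_mem (play m)).1
  have hsum1 : ∑ m ∈ Finset.Icc 1 k, P.f (play m) ≤ k := by
    calc ∑ m ∈ Finset.Icc 1 k, P.f (play m) ≤ ∑ m ∈ Finset.Icc 1 k, (1:ℝ) :=
          Finset.sum_le_sum fun m _ => (P.f_mem (play m)).2
    _ = k := by simp [Nat.card_Icc]
  have hA0 : 0 ≤ A := by
    rw [hA, DPP.avg]; positivity
  have hAle1 : A ≤ 1 := by
    rw [hA, DPP.avg]
    rw [div_mul_eq_mul_div, one_mul, div_le_one hk0]
    exact hsum1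
  -- bounds on w
  have hw1 : w s ≤ 1 + ε := by linarith
  have hw2 : -(2:ℝ) ≤ w s := by linarith
  have hwabs : |w s| ≤ 2 := abs_le.mpr ⟨hw2, by linarith⟩
  -- rewrite the sum via A
  have hSumEq : ∑ m ∈ Finset.Icc 1 k, P.f (play m) = (k:ℝ) * A := by
    rw [hA, DPP.avg]; field_simp
  rw [hSumEq]
  set r := (k:ℝ)/n with hr
  have hexpr : (1/(n:ℝ)) * ((k:ℝ) * A) = r * A := by rw [hr]; ring
  rw [hexpr]
  have hr0 : 0 ≤ r := by positivity
  have hrt : r ≤ t := by rw [hr, div_le_iff₀ hn0]; linarith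
  have hr1 : r ≤ 1 := le_trans hrt ht1
  have hrge : t - ε ≤ r := by
    rw [hr, le_div_iff₀ hn0]
    have h1n : (1:ℝ) ≤ ε * n := hinv
    nlinarith
  have habsAw : |A - w s| ≤ ε := abs_le.mpr ⟨by linarith, by linarith⟩
  have habsrt : |r - t| ≤ ε := abs_le.mpr ⟨by linarith, by linarith⟩
  have hdecomp : r * A - t * w s = r * (A - w s) + (r - t) * w s := by ring
  rw [hdecomp]
  calc |r * (A - w s) + (r - t) * w s| ≤ |r * (A - w s)| + |(r - t) * w s| := abs_add_le _ _
    _ = r * |A - w s| + |r - t| * |w s| := by rw [abs_mul, abs_mul, abs_of_nonneg hr0]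
    _ ≤ 1 * ε + ε * 2 :=
        add_le_add (mul_le_mul hr1 habsAw (abs_nonneg _) one_pos.le)
          (mul_le_mul habsrt hwabs (abs_nonneg _) hε.le)
    _ = 3 * ε := by ring
end
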